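/- For a ∈ (0,1], the curve t ↦ (x⁺(t,a), y⁺(t,a)) with x⁺(t,a) = (−a cos(at) + √(1−a²) sin(at))/a and y⁺(t,a) = (−4a√(1−a²) + 2at + 4a√(1−a²) cos²(at) − sin(2at) + 2a² sin(2at))/(4a²) is a solution of the Grushin geodesic equations with x(0) = −1, y(0) = 0, λₓ(0) = √(1−a²), λ_y(0) = a, i.e., it satisfies ẋ = λₓ, ẏ = a x², λ̇ₓ = −a² x with λₓ = ẋ. -/

import Mathlib

/-- The Grushin geodesic (x⁺(·,a), y⁺(·,a)) from the point (−1,0). -/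
noncomputable def xplus (a t : ℝ) : ℝ :=
  (-(a * Real.cos (a * t)) + Real.sqrt (1 - a ^ 2) * Real.sin (a * t)) / a

noncomputable def yplus (a t : ℝ) : ℝ :=
  (-(4 * a * Real.sqrt (1 - a ^ 2)) + 2 * a * t
      + 4 * a * Real.sqrt (1 - a ^ 2) * (Real.cos (a * t)) ^ 2
      - Real.sin (2 * a * t) + 2 * a ^ 2 * Real.sin (2 * a * t)) / (4 * a ^ 2)

/-- For a ∈ (0,1], the curve t ↦ (x⁺(t,a), y⁺(t,a)) solves the Grushin
geodesic equations ẋ = λₓ, ẏ = a x², λ̇ₓ = −a² x with x(0) = −1, y(0) = 0,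
λₓ(0) = √(1−a²) (and λ_y ≡ a). -/
theorem stmt14 (a : ℝ) (ha0 : 0 < a) (ha1 : a ≤ 1) :
    ∃ lx : ℝ → ℝ,
      (∀ t : ℝ, HasDerivAt (xplus a) (lx t) t) ∧
      (∀ t : ℝ, HasDerivAt (yplus a) (a * (xplus a t) ^ 2) t) ∧
      (∀ t : ℝ, HasDerivAt lx (-a ^ 2 * xplus a t) t) ∧
      xplus a 0 = -1 ∧ yplus a 0 = 0 ∧ lx 0 = Real.sqrt (1 - a ^ 2) := by
  set s := Real.sqrt (1 - a ^ 2) with hs_def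
  have ha : a ≠ 0 := ne_of_gt ha0
  have hs : s ^ 2 = 1 - a ^ 2 := Real.sq_sqrt (by nlinarith)
  refine ⟨fun t => a * Real.sin (a * t) + s * Real.cos (a * t), ?_, ?_, ?_, ?_, ?_, ?_⟩
  · intro t
    have hat : HasDerivAt (fun t : ℝ => a * t) a t := by
      simpa using (hasDerivAt_id t).const_mul a
    have hcos : HasDerivAt (fun t : ℝ => Real.cos (a * t))
        (-Real.sin (a * t) * a) t := (Real.hasDerivAt_cos (a * t)).comp t hat
    have hsin : HasDerivAt (fun t : ℝ => Real.sin (a * t))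
        (Real.cos (a * t) * a) t := (Real.hasDerivAt_sin (a * t)).comp t hat
    have h : HasDerivAt (xplus a)
        ((-(a * (-Real.sin (a * t) * a)) + s * (Real.cos (a * t) * a)) / a) t := by
      unfold xplus
      exact (((hcos.const_mul a).neg.add (hsin.const_mul s)).div_const a)
    convert h using 1
    field_simp
  · intro t
    have hat : HasDerivAt (fun t : ℝ => a * t) a t := by
      simpa using (hasDerivAt_id t).const_mul a
    have h2at : HasDerivAt (fun t : ℝ => 2 * a * t) (2 * a) t := by
      simpa using (hasDerivAt_id t).const_mul (2 * a)
    have hcos : HasDerivAt (fun t : ℝ => Real.cos (a * t))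
        (-Real.sin (a * t) * a) t := (Real.hasDerivAt_cos (a * t)).comp t hat
    have hcos2 : HasDerivAt (fun t : ℝ => (Real.cos (a * t)) ^ 2)
        (2 * Real.cos (a * t) * (-Real.sin (a * t) * a)) t := by
      simpa using hcos.fun_pow 2
    have hsin2 : HasDerivAt (fun t : ℝ => Real.sin (2 * a * t))
        (Real.cos (2 * a * t) * (2 * a)) t :=
      (Real.hasDerivAt_sin (2 * a * t)).comp t h2at
    have h : HasDerivAt (yplus a)
        ((0 + 2 * a + 4 * a * s * (2 * Real.cos (a * t) * (-Real.sin (a * t) * a))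
          - Real.cos (2 * a * t) * (2 * a)
          + 2 * a ^ 2 * (Real.cos (2 * a * t) * (2 * a))) / (4 * a ^ 2)) t := by
      unfold yplus
      exact ((((hasDerivAt_const t _).add h2at).add (hcos2.const_mul (4 * a * s))).sub
        hsin2 |>.add (hsin2.const_mul (2 * a ^ 2))).div_const (4 * a ^ 2)
    convert h using 1
    unfold xplus
    have h1 : Real.sin (a * t) ^ 2 = 1 - Real.cos (a * t) ^ 2 := by
      have := Real.sin_sq_add_cos_sq (a * t); linarith
    have h2 : (2 : ℝ) * a * t = a * t + a * t := by ring
    rw [h2, Real.cos_add, ← hs_def]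
    field_simp
    linear_combination (4 * a * Real.sin (a * t) ^ 2) * hs + 2 * a * h1
  · intro t
    have hat : HasDerivAt (fun t : ℝ => a * t) a t := by
      simpa using (hasDerivAt_id t).const_mul a
    have hcos : HasDerivAt (fun t : ℝ => Real.cos (a * t))
        (-Real.sin (a * t) * a) t := (Real.hasDerivAt_cos (a * t)).comp t hat
    have hsin : HasDerivAt (fun t : ℝ => Real.sin (a * t))
        (Real.cos (a * t) * a) t := (Real.hasDerivAt_sin (a * t)).comp t hat
    have h : HasDerivAt (fun t => a * Real.sin (a * t) + s * Real.cos (a * t))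
        (a * (Real.cos (a * t) * a) + s * (-Real.sin (a * t) * a)) t :=
      (hsin.const_mul a).add (hcos.const_mul s)
    convert h using 1
    unfold xplus
    field_simp
    ring
  · simp [xplus, ha]
  · simp [yplus]
  · simp
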